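/- arXiv:1807.08139 — 5 statements merged into one kernel-verified Lean document; each statement's English description precedes it below -/
import Mathlib

section
/- Let W₁, ..., W_k be finitely many closed half-spaces in ℝⁿ with nonempty intersection W = ⋂ᵢ Wᵢ. Then there exists a constant c > 0 such that for every x ∈ ℝⁿ, d(x, W) ≤ c · maxᵢ d(x, Wᵢ). -/
open Metric Set
open scoped RealInnerProductSpace

section Aux

variable {E : Type*} [NormedAddCommGroup E] [InnerProductSpace ℝ E]

/-- the finitely generated cone on `a i`, `i ∈ I`. -/
def coneOf {ι : Type} [Fintype ι] (a : ι → E) (I : Finset ι) : Set E :=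
  {z | ∃ l : ι → ℝ, (∀ i, 0 ≤ l i) ∧ (∀ i ∉ I, l i = 0) ∧ z = ∑ i, l i • a i}

lemma coneOf_zero_mem {ι : Type} [Fintype ι] (a : ι → E) (I : Finset ι) :
    (0 : E) ∈ coneOf a I :=
  ⟨0, fun _ => le_rfl, fun _ _ => rfl, by simp⟩

lemma coneOf_smul_mem {ι : Type} [Fintype ι] {a : ι → E} {I : Finset ι} {c : ℝ}
    (hc : 0 ≤ c) {z : E} (hz : z ∈ coneOf a I) : c • z ∈ coneOf a I := by
  obtain ⟨l, hl0, hlI, rfl⟩ := hz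
  refine ⟨fun i => c * l i, fun i => mul_nonneg hc (hl0 i),
    fun i hi => by simp [hlI i hi], ?_⟩
  rw [Finset.smul_sum]
  simp [mul_smul]

lemma coneOf_add_mem {ι : Type} [Fintype ι] {a : ι → E} {I : Finset ι} {z w : E}
    (hz : z ∈ coneOf a I) (hw : w ∈ coneOf a I) : z + w ∈ coneOf a I := by
  obtain ⟨l, hl0, hlI, rfl⟩ := hz
  obtain ⟨l', hl0', hlI', rfl⟩ := hw
  refine ⟨fun i => l i + l' i, fun i => add_nonneg (hl0 i) (hl0' i),
    fun i hi => by simp [hlI i hi, hlI' i hi], ?_⟩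
  rw [← Finset.sum_add_distrib]
  simp [add_smul]

lemma coneOf_convex {ι : Type} [Fintype ι] (a : ι → E) (I : Finset ι) :
    Convex ℝ (coneOf a I) := fun _ hz _ hw s t hs ht _ =>
  coneOf_add_mem (coneOf_smul_mem hs hz) (coneOf_smul_mem ht hw)

lemma coneOf_basis_mem {ι : Type} [Fintype ι] (a : ι → E) {I : Finset ι} {i : ι}
    (hi : i ∈ I) : a i ∈ coneOf a I := by
  classical
  refine ⟨fun j => if j = i then 1 else 0, fun j => by positivity,
    fun j hj => if_neg (fun h : j = i => hj (h ▸ hi)), ?_⟩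
  simp [ite_smul]

lemma coneOf_empty {ι : Type} [Fintype ι] (a : ι → E) {z : E}
    (hz : z ∈ coneOf a (∅ : Finset ι)) : z = 0 := by
  obtain ⟨l, _, hlI, rfl⟩ := hz
  have : ∀ i, l i = 0 := fun i => hlI i (Finset.notMem_empty i)
  simp [this]

/-- Farkas-type lemma: if `⟪u, y⟫ ≤ 0` whenever `⟪a i, y⟫ ≤ 0` for all `i ∈ I`, then
`u` lies in the closure of the cone generated by the `a i`, `i ∈ I`. -/
lemma mem_closure_coneOf {ι : Type} [Fintype ι] [CompleteSpace E] (a : ι → E)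
    (I : Finset ι) (u : E)
    (h : ∀ y : E, (∀ i ∈ I, ⟪a i, y⟫ ≤ 0) → ⟪u, y⟫ ≤ 0) :
    u ∈ closure (coneOf a I) := by
  by_contra hu
  obtain ⟨f, s, hfs, hsu⟩ := geometric_hahn_banach_closed_point
    ((coneOf_convex a I).closure) isClosed_closure hu
  set y := (InnerProductSpace.toDual ℝ E).symm f with hy
  have hyz : ∀ z, ⟪y, z⟫ = f z := fun z => InnerProductSpace.toDual_symm_apply
  have hs0 : 0 < s := by
    have := hfs 0 (subset_closure (coneOf_zero_mem a I))
    simpa using this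
  have hai : ∀ i ∈ I, ⟪a i, y⟫ ≤ 0 := by
    intro i hi
    by_contra hpos
    push_neg at hpos
    rw [real_inner_comm, hyz] at hpos
    have hmem : ((s + 1) / f (a i)) • a i ∈ coneOf a I :=
      coneOf_smul_mem (by positivity) (coneOf_basis_mem a hi)
    have := hfs _ (subset_closure hmem)
    rw [map_smul, smul_eq_mul, div_mul_cancel₀ _ (ne_of_gt hpos)] at this
    linarith
  have huy : ⟪u, y⟫ ≤ 0 := h y hai
  rw [real_inner_comm, hyz] at huy
  linarith

/-- lower bound on the distance to a half-space. -/
lemma halfspace_infDist_lb {a : E} (hA : a ≠ 0) {b : ℝ} (x : E) {S : Set E}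
    (hS : S = {y | ⟪a, y⟫ ≤ b}) (hSne : S.Nonempty) :
    (⟪a, x⟫ - b) / ‖a‖ ≤ infDist x S := by
  rw [Metric.infDist_eq_iInf]
  haveI : Nonempty S := hSne.to_subtype
  have hanorm : (0 : ℝ) < ‖a‖ := norm_pos_iff.2 hA
  refine le_ciInf fun w => ?_
  obtain ⟨y, hyS⟩ := w
  have hyb : ⟪a, y⟫ ≤ b := by rw [hS] at hyS; exact hyS
  have h1 : ⟪a, x⟫ - b ≤ ⟪a, x - y⟫ := by
    rw [inner_sub_right]; linarith
  have h2 : ⟪a, x - y⟫ ≤ ‖a‖ * ‖x - y‖ := real_inner_le_norm a (x - y)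
  rw [div_le_iff₀ hanorm]
  calc ⟪a, x⟫ - b ≤ ‖a‖ * ‖x - y‖ := h1.trans h2
    _ = dist x y * ‖a‖ := by rw [dist_eq_norm]; ring

/-- compactness: positive lower bound for the max inner product on the cone ∩ sphere. -/
lemma coneOf_min {ι : Type} [Fintype ι] [ProperSpace E] (a : ι → E) (ha : ∀ i, a i ≠ 0)
    (I : Finset ι) :
    ∃ m > (0 : ℝ), ∀ u ∈ closure (coneOf a I), ‖u‖ = 1 →
      ∃ i ∈ I, m * ‖a i‖ ≤ ⟪a i, u⟫ := by
  classical
  set K := closure (coneOf a I) ∩ sphere (0 : E) 1 with hK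
  -- positivity of the max on K
  have hpos : ∀ u ∈ K, ∃ i ∈ I, 0 < ⟪a i, u⟫ := by
    rintro u ⟨huC, huS⟩
    by_contra hcon
    push_neg at hcon
    have hC : ∀ z ∈ coneOf a I, ⟪z, u⟫ ≤ 0 := by
      rintro z ⟨l, hl0, hlI, rfl⟩
      rw [sum_inner]
      refine Finset.sum_nonpos fun i _ => ?_
      rw [real_inner_smul_left]
      by_cases hi : i ∈ I
      · exact mul_nonpos_of_nonneg_of_nonpos (hl0 i) (hcon i hi)
      · rw [hlI i hi, zero_mul]
    have hCl : ∀ z ∈ closure (coneOf a I), ⟪z, u⟫ ≤ 0 := by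
      intro z hz
      have : closure (coneOf a I) ⊆ {z | ⟪z, u⟫ ≤ 0} :=
        closure_minimal hC (isClosed_le (by continuity) continuous_const)
      exact this hz
    have hu0 : ⟪u, u⟫ ≤ 0 := hCl u huC
    have : u = 0 := by
      have := real_inner_self_nonneg (x := u)
      have h0 : ⟪u, u⟫ = 0 := le_antisymm hu0 this
      exact inner_self_eq_zero.1 h0
    rw [this] at huS
    simp at huS
  by_cases hKne : K.Nonempty
  · -- I must be nonempty
    have hI : I.Nonempty := by
      obtain ⟨u, huK⟩ := hKne
      obtain ⟨i, hi, _⟩ := hpos u huK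
      exact ⟨i, hi⟩
    set φ : E → ℝ := fun u => I.sup' hI fun i => ⟪a i, u⟫ / ‖a i‖ with hφ
    have hφc : Continuous φ := by
      apply Continuous.finset_sup'_apply hI
      intro i _
      exact (continuous_const.inner continuous_id).div_const _
    have hKcomp : IsCompact K := (isCompact_sphere (0 : E) 1).inter_left isClosed_closure
    obtain ⟨u₀, hu₀K, hmin⟩ := hKcomp.exists_isMinOn hKne hφc.continuousOn
    obtain ⟨i₀, hi₀, hipos⟩ := hpos u₀ hu₀K
    have hm0 : 0 < φ u₀ :=
      lt_of_lt_of_le (div_pos hipos (norm_pos_iff.2 (ha i₀)))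
        (Finset.le_sup' (fun i => ⟪a i, u₀⟫ / ‖a i‖) hi₀)
    refine ⟨φ u₀, hm0, fun u huC huS => ?_⟩
    have huK : u ∈ K := ⟨huC, mem_sphere_zero_iff_norm.2 huS⟩
    have hle : φ u₀ ≤ φ u := hmin huK
    obtain ⟨i, hiI, hieq⟩ := I.exists_mem_eq_sup' hI fun i => ⟪a i, u⟫ / ‖a i‖
    refine ⟨i, hiI, ?_⟩
    have : φ u₀ ≤ ⟪a i, u⟫ / ‖a i‖ := by rw [← hieq]; exact hle
    have hn : (0:ℝ) < ‖a i‖ := norm_pos_iff.2 (ha i)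
    calc φ u₀ * ‖a i‖ ≤ (⟪a i, u⟫ / ‖a i‖) * ‖a i‖ := by
          exact mul_le_mul_of_nonneg_right this hn.le
      _ = ⟪a i, u⟫ := by field_simp
  · refine ⟨1, one_pos, fun u huC huS => ?_⟩
    exact absurd ⟨u, huC, mem_sphere_zero_iff_norm.2 huS⟩ hKne

end Aux

/-- Hoffman-type bound: for finitely many closed half-spaces with
nonempty intersection W, there is c > 0 with d(x, W) ≤ c · maxᵢ d(x, Wᵢ). -/
theorem stmt_5 (n : ℕ) (ι : Type) [Fintype ι] [Nonempty ι]
    (a : ι → EuclideanSpace ℝ (Fin n)) (b : ι → ℝ) (ha : ∀ i, a i ≠ 0)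
    (W : ι → Set (EuclideanSpace ℝ (Fin n)))
    (hW : ∀ i, W i = {x | inner ℝ (a i) x ≤ b i})
    (hne : (⋂ i, W i).Nonempty) :
    ∃ c > (0 : ℝ), ∀ x : EuclideanSpace ℝ (Fin n),
      Metric.infDist x (⋂ i, W i) ≤ c * ⨆ i, Metric.infDist x (W i) := by
  classical
  set Wall : Set (EuclideanSpace ℝ (Fin n)) := ⋂ i, W i with hWall
  have hWconv : ∀ i, Convex ℝ (W i) := by
    intro i
    rw [hW i]
    exact convex_halfSpace_le ⟨fun x y => inner_add_right _ _ _,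
      fun c x => real_inner_smul_right _ _ _⟩ (b i)
  have hWclosed : ∀ i, IsClosed (W i) := by
    intro i
    rw [hW i]
    exact isClosed_le (continuous_const.inner continuous_id) continuous_const
  have hconv : Convex ℝ Wall := convex_iInter fun i => hWconv i
  have hclosed : IsClosed Wall := isClosed_iInter fun i => hWclosed i
  have hWine : ∀ i, (W i).Nonempty := by
    obtain ⟨w, hw⟩ := hne
    exact fun i => ⟨w, Set.mem_iInter.1 hw i⟩
  -- the constants from compactness, one per subset
  choose m hmpos hm using fun I : Finset ι => coneOf_min a ha I
  set c : ℝ := (Finset.univ : Finset (Finset ι)).sup' Finset.univ_nonempty fun I => (m I)⁻¹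
    with hc
  have hcI : ∀ I : Finset ι, (m I)⁻¹ ≤ c :=
    fun I => Finset.le_sup' (fun J => (m J)⁻¹) (Finset.mem_univ I)
  have hcpos : 0 < c := lt_of_lt_of_le (inv_pos.2 (hmpos ∅)) (hcI ∅)
  refine ⟨c, hcpos, fun x => ?_⟩
  have hsup_nonneg : 0 ≤ ⨆ i, Metric.infDist x (W i) := by
    obtain ⟨i₀⟩ := ‹Nonempty ι›
    exact le_trans Metric.infDist_nonneg
      (le_ciSup (f := fun i => Metric.infDist x (W i)) (Finite.bddAbove_range _) i₀)
  by_cases hx : x ∈ Wall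
  · rw [Metric.infDist_zero_of_mem hx]
    positivity
  -- projection
  obtain ⟨p, hpW, hproj⟩ :=
    exists_norm_eq_iInf_of_complete_convex hne hclosed.isComplete hconv x
  have hvar : ∀ w ∈ Wall, ⟪x - p, w - p⟫ ≤ 0 :=
    (norm_eq_iInf_iff_real_inner_le_zero hconv hpW).1 hproj
  have hdist : Metric.infDist x Wall = ‖x - p‖ := by
    rw [Metric.infDist_eq_iInf, hproj]
    exact iInf_congr fun w => dist_eq_norm x w
  set t : ℝ := ‖x - p‖ with ht
  have htpos : 0 < t := by
    rw [ht, norm_pos_iff, sub_ne_zero]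
    intro h
    exact hx (h ▸ hpW)
  -- active index set
  set I : Finset ι := Finset.univ.filter fun i => ⟪a i, p⟫ = b i with hI
  have hpWi : ∀ i, ⟪a i, p⟫ ≤ b i := by
    intro i
    have := Set.mem_iInter.1 hpW i
    rwa [hW i] at this
  -- Farkas: x - p in the closure of the active cone
  have hxp : x - p ∈ closure (coneOf a I) := by
    apply mem_closure_coneOf
    intro y hy
    -- build a feasible perturbation p + ε • y
    set εf : ι → ℝ := fun i =>
      if ⟪a i, p⟫ = b i then 1 else (b i - ⟪a i, p⟫) / (|⟪a i, y⟫| + 1) with hεf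
    have hεfpos : ∀ i, 0 < εf i := by
      intro i
      by_cases hib : ⟪a i, p⟫ = b i
      · simp only [hεf]
        rw [if_pos hib]
        exact one_pos
      · have hlt : ⟪a i, p⟫ < b i := lt_of_le_of_ne (hpWi i) hib
        have habs : (0:ℝ) < |⟪a i, y⟫| + 1 := by positivity
        simp only [hεf, if_neg hib]
        exact div_pos (by linarith) habs
    set ε : ℝ := Finset.univ.inf' Finset.univ_nonempty εf with hε
    have hεpos : 0 < ε := by
      rw [hε, Finset.lt_inf'_iff]
      exact fun i _ => hεfpos i
    have hεle : ∀ i, ε ≤ εf i := fun i => Finset.inf'_le _ (Finset.mem_univ i)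
    have hwmem : p + ε • y ∈ Wall := by
      rw [hWall, Set.mem_iInter]
      intro i
      rw [hW i]
      show ⟪a i, p + ε • y⟫ ≤ b i
      rw [inner_add_right, real_inner_smul_right]
      by_cases hib : ⟪a i, p⟫ = b i
      · have hyi : ⟪a i, y⟫ ≤ 0 := hy i (Finset.mem_filter.2 ⟨Finset.mem_univ i, hib⟩)
        nlinarith
      · have hlt : ⟪a i, p⟫ < b i := lt_of_le_of_ne (hpWi i) hib
        have h1 : ε * ⟪a i, y⟫ ≤ ε * |⟪a i, y⟫| :=
          mul_le_mul_of_nonneg_left (le_abs_self _) hεpos.le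
        have h2 : ε * |⟪a i, y⟫| ≤ εf i * (|⟪a i, y⟫| + 1) := by
          have := hεle i
          have habs : (0:ℝ) ≤ |⟪a i, y⟫| := abs_nonneg _
          nlinarith [hεfpos i]
        have h3 : εf i * (|⟪a i, y⟫| + 1) = b i - ⟪a i, p⟫ := by
          simp only [hεf, if_neg hib]
          field_simp
        linarith
    have := hvar _ hwmem
    rw [add_sub_cancel_left, real_inner_smul_right] at this
    nlinarith
  -- normalize
  have hunit : t⁻¹ • (x - p) ∈ closure (coneOf a I) :=
    map_mem_closure (continuous_const_smul _) hxp
      fun z hz => coneOf_smul_mem (inv_nonneg.2 htpos.le) hz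
  have hunitnorm : ‖t⁻¹ • (x - p)‖ = 1 := by
    rw [norm_smul, norm_inv, Real.norm_eq_abs, abs_of_pos htpos, ← ht,
      inv_mul_cancel₀ htpos.ne']
  obtain ⟨i, hiI, hmi⟩ := hm I _ hunit hunitnorm
  have hib : ⟪a i, p⟫ = b i := (Finset.mem_filter.1 hiI).2
  rw [real_inner_smul_right] at hmi
  -- hmi : m I * ‖a i‖ ≤ t⁻¹ * ⟪a i, x - p⟫
  have hkey : m I * ‖a i‖ * t ≤ ⟪a i, x⟫ - b i := by
    have h1 : m I * ‖a i‖ * t ≤ t⁻¹ * ⟪a i, x - p⟫ * t :=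
      mul_le_mul_of_nonneg_right hmi htpos.le
    have h2 : t⁻¹ * ⟪a i, x - p⟫ * t = ⟪a i, x - p⟫ := by
      field_simp
    rw [h2] at h1
    rw [inner_sub_right, hib] at h1
    linarith
  have hlb : m I * t ≤ Metric.infDist x (W i) := by
    have hdlb : (⟪a i, x⟫ - b i) / ‖a i‖ ≤ Metric.infDist x (W i) :=
      halfspace_infDist_lb (ha i) x (hW i) (hWine i)
    have hn : (0:ℝ) < ‖a i‖ := norm_pos_iff.2 (ha i)
    have : m I * t ≤ (⟪a i, x⟫ - b i) / ‖a i‖ := by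
      rw [le_div_iff₀ hn]
      nlinarith
    linarith
  have hfin : t ≤ c * ⨆ j, Metric.infDist x (W j) := by
    have hmI : 0 < m I := hmpos I
    have h1 : t ≤ (m I)⁻¹ * Metric.infDist x (W i) := by
      have h := mul_le_mul_of_nonneg_left hlb (inv_nonneg.2 hmI.le)
      rwa [← mul_assoc, inv_mul_cancel₀ hmI.ne', one_mul] at h
    have h2 : Metric.infDist x (W i) ≤ ⨆ j, Metric.infDist x (W j) :=
      le_ciSup (f := fun j => Metric.infDist x (W j)) (Finite.bddAbove_range _) i
    calc t ≤ (m I)⁻¹ * Metric.infDist x (W i) := h1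
      _ ≤ c * Metric.infDist x (W i) :=
          mul_le_mul_of_nonneg_right (hcI I) Metric.infDist_nonneg
      _ ≤ c * ⨆ j, Metric.infDist x (W j) :=
          mul_le_mul_of_nonneg_left h2 hcpos.le
  rw [hdist]
  exact hfin
end

section
/- Let M ⊂ ℝⁿ be finite, Φ(x) = max_{μ∈M}(-μᵀx + b_μ), with regions R_μ and active sets M(x) as usual. Define a point p to be critical if span{ μ - μ' : μ, μ' ∈ M(p) } = ℝⁿ. Then for any ν ∈ M and p ∈ R_ν, p is a critical point if and only if p is an extreme point of the polyhedron R_ν. In particular, the set of critical points is finite. -/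
lemma ortho_aux {n : ℕ} (S : Set (EuclideanSpace ℝ (Fin n)))
    (hS : Submodule.span ℝ S = ⊤) (v : EuclideanSpace ℝ (Fin n))
    (h : ∀ d ∈ S, inner ℝ d v = (0:ℝ)) : v = 0 := by
  have hv : v ∈ (Submodule.span ℝ S)ᗮ := by
    rw [Submodule.mem_orthogonal]
    intro u hu
    induction hu using Submodule.span_induction with
    | mem x hx => exact h x hx
    | zero => simp
    | add x y hx hy ihx ihy => rw [inner_add_left, ihx, ihy]; ring
    | smul a x hx ih => rw [real_inner_smul_left, ih]; ring
  rw [hS, Submodule.top_orthogonal_eq_bot, Submodule.mem_bot] at hv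
  exact hv

/-- For p in a region R_ν, p is a critical point iff p is an
extreme point of R_ν; and the set of critical points is finite. -/
theorem stmt_8 (n : ℕ) (M : Finset (EuclideanSpace ℝ (Fin n)))
    (b : EuclideanSpace ℝ (Fin n) → ℝ)
    (Act : EuclideanSpace ℝ (Fin n) → Set (EuclideanSpace ℝ (Fin n)))
    (hAct : ∀ p, Act p = {κ : EuclideanSpace ℝ (Fin n) | κ ∈ M ∧
        ∀ ν ∈ M, -(inner ℝ ν p) + b ν ≤ -(inner ℝ κ p) + b κ})
    (Critical : EuclideanSpace ℝ (Fin n) → Prop)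
    (hCrit : ∀ p, Critical p ↔
        Submodule.span ℝ {d : EuclideanSpace ℝ (Fin n) |
          ∃ κ ∈ Act p, ∃ κ' ∈ Act p, d = κ - κ'} = ⊤)
    (R : EuclideanSpace ℝ (Fin n) → Set (EuclideanSpace ℝ (Fin n)))
    (hR : ∀ ν, R ν = {x : EuclideanSpace ℝ (Fin n) |
        ∀ κ ∈ M, -(inner ℝ κ x) + b κ ≤ -(inner ℝ ν x) + b ν}) :
    (∀ ν ∈ M, ∀ p ∈ R ν, (Critical p ↔ p ∈ Set.extremePoints ℝ (R ν))) ∧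
    {p : EuclideanSpace ℝ (Fin n) | Critical p}.Finite := by
  classical
  -- two active points give equal values
  have hacteq : ∀ p, ∀ κ ∈ Act p, ∀ κ' ∈ Act p,
      -(inner ℝ κ p) + b κ = -(inner ℝ κ' p : ℝ) + b κ' := by
    intro p κ hκ κ' hκ'
    rw [hAct] at hκ hκ'
    exact le_antisymm (hκ'.2 κ hκ.1) (hκ.2 κ' hκ'.1)
  constructor
  · intro ν hν p hp
    have hpR : ∀ κ ∈ M, -(inner ℝ κ p : ℝ) + b κ ≤ -(inner ℝ ν p) + b ν := by
      rw [hR] at hp; exact hp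
    have hνAct : ν ∈ Act p := by rw [hAct]; exact ⟨hν, fun κ hκ => hpR κ hκ⟩
    constructor
    · -- Critical → extreme
      intro hcrit
      rw [hCrit] at hcrit
      rw [mem_extremePoints]
      refine ⟨hp, ?_⟩
      intro x hx y hy hseg
      obtain ⟨a, c, ha, hc, hac, hpe⟩ := hseg
      have hxR : ∀ κ ∈ M, -(inner ℝ κ x : ℝ) + b κ ≤ -(inner ℝ ν x) + b ν := by
        rw [hR] at hx; exact hx
      have hyR : ∀ κ ∈ M, -(inner ℝ κ y : ℝ) + b κ ≤ -(inner ℝ ν y) + b ν := by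
        rw [hR] at hy; exact hy
      -- for each active κ, the gap vanishes at x and y
      have hgap : ∀ κ ∈ Act p, (inner ℝ κ x : ℝ) - inner ℝ ν x = b κ - b ν ∧
          (inner ℝ κ y : ℝ) - inner ℝ ν y = b κ - b ν := by
        intro κ hκ
        have hκM : κ ∈ M := by rw [hAct] at hκ; exact hκ.1
        have heq : -(inner ℝ κ p : ℝ) + b κ = -(inner ℝ ν p) + b ν :=
          hacteq p κ hκ ν hνAct
        have hip : (inner ℝ κ p : ℝ) = a * inner ℝ κ x + c * inner ℝ κ y := by
          rw [← hpe, inner_add_right, real_inner_smul_right, real_inner_smul_right]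
        have hiν : (inner ℝ ν p : ℝ) = a * inner ℝ ν x + c * inner ℝ ν y := by
          rw [← hpe, inner_add_right, real_inner_smul_right, real_inner_smul_right]
        have hgx : (0:ℝ) ≤ (inner ℝ κ x : ℝ) - inner ℝ ν x - (b κ - b ν) := by
          have := hxR κ hκM; linarith
        have hgy : (0:ℝ) ≤ (inner ℝ κ y : ℝ) - inner ℝ ν y - (b κ - b ν) := by
          have := hyR κ hκM; linarith
        have hsum : a * ((inner ℝ κ x : ℝ) - inner ℝ ν x - (b κ - b ν))
            + c * ((inner ℝ κ y : ℝ) - inner ℝ ν y - (b κ - b ν)) = 0 := by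
          have h1 : a * (b κ - b ν) + c * (b κ - b ν) = b κ - b ν := by
            rw [← add_mul, hac, one_mul]
          nlinarith [hip, hiν, heq]
        have hgx0 : (inner ℝ κ x : ℝ) - inner ℝ ν x - (b κ - b ν) = 0 := by
          by_contra h
          have h' : 0 < (inner ℝ κ x : ℝ) - inner ℝ ν x - (b κ - b ν) :=
            lt_of_le_of_ne hgx (Ne.symm h)
          nlinarith [mul_pos ha h', mul_nonneg hc.le hgy]
        have hgy0 : (inner ℝ κ y : ℝ) - inner ℝ ν y - (b κ - b ν) = 0 := by
          by_contra h
          have h' : 0 < (inner ℝ κ y : ℝ) - inner ℝ ν y - (b κ - b ν) :=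
            lt_of_le_of_ne hgy (Ne.symm h)
          nlinarith [mul_pos hc h', mul_nonneg ha.le hgx]
        exact ⟨by linarith, by linarith⟩
      have hxy : x = y := by
        have : x - y = 0 := by
          apply ortho_aux _ hcrit
          rintro d ⟨κ, hκ, κ', hκ', rfl⟩
          have h1 := hgap κ hκ
          have h2 := hgap κ' hκ'
          rw [inner_sub_left, inner_sub_right, inner_sub_right]
          linarith [h1.1, h1.2, h2.1, h2.2]
        exact sub_eq_zero.mp this
      subst hxy
      have hpx : p = x := by
        rw [← hpe, ← add_smul, hac, one_smul]
      exact ⟨hpx.symm, hpx.symm⟩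
    · -- extreme → Critical
      intro hext
      rw [hCrit]
      by_contra hncrit
      have hne : (Submodule.span ℝ {d : EuclideanSpace ℝ (Fin n) |
          ∃ κ ∈ Act p, ∃ κ' ∈ Act p, d = κ - κ'})ᗮ ≠ ⊥ := by
        intro h
        exact hncrit (Submodule.orthogonal_eq_bot_iff.mp h)
      obtain ⟨u, hu, hune⟩ := Submodule.exists_mem_ne_zero_of_ne_bot hne
      have horth : ∀ d ∈ {d : EuclideanSpace ℝ (Fin n) |
          ∃ κ ∈ Act p, ∃ κ' ∈ Act p, d = κ - κ'}, (inner ℝ d u : ℝ) = 0 := by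
        intro d hd
        exact (Submodule.mem_orthogonal _ u).mp hu d (Submodule.subset_span hd)
      -- strict gap for inactive κ
      set s : Finset (EuclideanSpace ℝ (Fin n)) := M.filter (fun κ => κ ∉ Act p) with hs
      have hδ : ∀ κ ∈ s, -(inner ℝ κ p : ℝ) + b κ < -(inner ℝ ν p) + b ν := by
        intro κ hκ
        obtain ⟨hκM, hκA⟩ := Finset.mem_filter.mp hκ
        simp only [hAct, Set.mem_setOf_eq, not_and, not_forall, not_le] at hκA
        obtain ⟨μ, hμM, hμ⟩ := hκA hκM
        calc -(inner ℝ κ p : ℝ) + b κ < -(inner ℝ μ p) + b μ := hμ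
          _ ≤ -(inner ℝ ν p) + b ν := hpR μ hμM
      set term : EuclideanSpace ℝ (Fin n) → ℝ := fun κ =>
        ((-(inner ℝ ν p : ℝ) + b ν) - (-(inner ℝ κ p) + b κ)) / (|(inner ℝ ν u : ℝ) - inner ℝ κ u| + 1) with hterm
      set t : Finset ℝ := insert 1 (s.image term) with ht
      have htne : t.Nonempty := ⟨1, Finset.mem_insert_self _ _⟩
      set ε : ℝ := t.min' htne with hε
      have hε0 : 0 < ε := by
        have hmem := t.min'_mem htne
        rw [← hε] at hmem
        rcases Finset.mem_insert.mp hmem with h | h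
        · rw [h]; norm_num
        · obtain ⟨κ, hκ, hκe⟩ := Finset.mem_image.mp h
          rw [← hκe]
          apply div_pos (by linarith [hδ κ hκ]) (by positivity)
      have hεle : ∀ κ ∈ s, ε ≤ term κ := fun κ hκ =>
        Finset.min'_le _ _ (Finset.mem_insert_of_mem (Finset.mem_image_of_mem _ hκ))
      -- key inequality for both ±
      have hkey : ∀ κ ∈ M, ∀ σ : ℝ, |σ| = 1 →
          -(inner ℝ κ (p + (σ * ε) • u) : ℝ) + b κ ≤ -(inner ℝ ν (p + (σ * ε) • u)) + b ν := by
        intro κ hκ σ hσ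
        rw [inner_add_right, inner_add_right, real_inner_smul_right, real_inner_smul_right]
        by_cases hκA : κ ∈ Act p
        · have heq := hacteq p κ hκA ν hνAct
          have h0 : (inner ℝ (ν - κ) u : ℝ) = 0 := horth _ ⟨ν, hνAct, κ, hκA, rfl⟩
          rw [inner_sub_left] at h0
          have : (inner ℝ κ u : ℝ) = inner ℝ ν u := by linarith
          rw [this]
          linarith
        · have hκs : κ ∈ s := Finset.mem_filter.mpr ⟨hκ, hκA⟩
          have h1 := hεle κ hκs
          rw [hterm] at h1
          have h2 : ε * (|(inner ℝ ν u : ℝ) - inner ℝ κ u| + 1) ≤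
              (-(inner ℝ ν p : ℝ) + b ν) - (-(inner ℝ κ p) + b κ) :=
            (le_div_iff₀ (by positivity)).mp h1
          have h3 : σ * ε * ((inner ℝ ν u : ℝ) - inner ℝ κ u) ≤
              ε * |(inner ℝ ν u : ℝ) - inner ℝ κ u| := by
            rcases abs_eq (by norm_num : (0:ℝ) ≤ 1) |>.mp hσ with h | h
            · rw [h, one_mul]
              exact (mul_le_mul_of_nonneg_left (le_abs_self _) hε0.le)
            · rw [h]
              have : (-1 : ℝ) * ε * ((inner ℝ ν u : ℝ) - inner ℝ κ u)
                  = ε * (-((inner ℝ ν u : ℝ) - inner ℝ κ u)) := by ring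
              rw [this]
              exact mul_le_mul_of_nonneg_left (neg_le_abs _) hε0.le
          nlinarith
      have h1 : p + ε • u ∈ R ν := by
        rw [hR]
        intro κ hκ
        have := hkey κ hκ 1 (by norm_num)
        simpa using this
      have h2 : p + (-ε) • u ∈ R ν := by
        rw [hR]
        intro κ hκ
        have := hkey κ hκ (-1) (by norm_num)
        simpa using this
      rw [mem_extremePoints] at hext
      have := hext.2 _ h1 _ h2 ⟨1/2, 1/2, by norm_num, by norm_num, by norm_num, by module⟩
      have hεu : ε • u = 0 := by
        have h3 := this.1
        have : p + ε • u - p = 0 := by rw [h3]; simp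
        simpa using this
      rcases smul_eq_zero.mp hεu with h | h
      · exact hε0.ne' h
      · exact hune h
  · -- finiteness
    have hinj : Set.InjOn Act {p | Critical p} := by
      intro p hp q hq hAeq
      have hspan := (hCrit p).mp hp
      have : p - q = 0 := by
        apply ortho_aux _ hspan
        rintro d ⟨κ, hκ, κ', hκ', rfl⟩
        have h1 := hacteq p κ hκ κ' hκ'
        have h2 := hacteq q κ (hAeq ▸ hκ) κ' (hAeq ▸ hκ')
        rw [inner_sub_left, inner_sub_right, inner_sub_right]
        linarith
      exact sub_eq_zero.mp this
    have himg : (Act '' {p | Critical p}).Finite := by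
      apply Set.Finite.subset (Set.Finite.finite_subsets M.finite_toSet)
      rintro _ ⟨p, hp, rfl⟩
      intro κ hκ
      rw [hAct] at hκ
      exact hκ.1
    exact Set.Finite.of_finite_image himg hinj
end

section
/- Let Φ : ℝⁿ → ℝ be convex, let ξ ∈ ℝⁿ, and suppose that -ξ ∈ ∂Φ(p + tξ) for all t ≥ 0. Then for every x ∈ ℝⁿ and every y ∈ -∂Φ(x), one has ⟨ξ, y⟩ ≥ ‖ξ‖². -/
/-- If -ξ ∈ ∂Φ(p + tξ) for all t ≥ 0, then for every x and every
y ∈ -∂Φ(x), ⟨ξ, y⟩ ≥ ‖ξ‖². -/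
theorem stmt_14 (n : ℕ) (Φ : EuclideanSpace ℝ (Fin n) → ℝ)
    (hΦ : ConvexOn ℝ Set.univ Φ) (p ξ : EuclideanSpace ℝ (Fin n))
    (hline : ∀ t : ℝ, 0 ≤ t →
      ∀ y, Φ (p + t • ξ) + inner ℝ (-ξ) (y - (p + t • ξ)) ≤ Φ y) :
    ∀ x y : EuclideanSpace ℝ (Fin n),
      (∀ z, Φ x + inner ℝ (-y) (z - x) ≤ Φ z) → ‖ξ‖ ^ 2 ≤ inner ℝ ξ y := by
  intro x y hy
  set a : ℝ := inner ℝ (y - ξ) (p - x) with ha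
  set c : ℝ := inner ℝ (y - ξ) ξ with hc
  have key : ∀ t : ℝ, 0 ≤ t → 0 ≤ a + t * c := by
    intro t ht
    have h1 := hline t ht x
    have h2 := hy (p + t • ξ)
    have h3 : (inner ℝ (-ξ) (x - (p + t • ξ)) : ℝ) + inner ℝ (-y) ((p + t • ξ) - x) ≤ 0 := by
      linarith
    have expand : (inner ℝ (-ξ) (x - (p + t • ξ)) : ℝ) + inner ℝ (-y) ((p + t • ξ) - x)
        = -(a + t * c) := by
      simp only [ha, hc, inner_sub_left, inner_sub_right, inner_add_right, inner_neg_left,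
        real_inner_smul_right]
      ring
    rw [expand] at h3
    linarith
  have hc0 : 0 ≤ c := by
    by_contra h
    push_neg at h
    have hcn : 0 < -c := by linarith
    have ht : 0 ≤ (|a| + 1) / (-c) := by positivity
    have hk := key _ ht
    have : (|a| + 1) / (-c) * c = -(|a| + 1) := by
      rw [div_mul_eq_mul_div, div_eq_iff hcn.ne']
      ring
    rw [this] at hk
    have := abs_nonneg a
    have := le_abs_self a
    linarith
  have hce : c = inner ℝ ξ y - ‖ξ‖ ^ 2 := by
    rw [hc, inner_sub_left, real_inner_self_eq_norm_sq, real_inner_comm y ξ]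
  linarith
end

section
/- Let M ⊂ ℝⁿ be finite with associated Φ(x) = max_{μ∈M}(-μᵀx + b_μ), regions R_μ, active sets M(x), and set of critical points C (points p with span{μ-μ' : μ,μ' ∈ M(p)} = ℝⁿ). Let p ∈ C, and let B be the closed ball of radius γ₀ around p, where 2γ₀ = min{ d(p', R_μ) : p' ∈ C, μ ∈ M, p' ∉ R_μ } (taken to be +∞ if the set is empty). Then for every x ∈ B, M(x) ⊆ M(p), and consequently Φ(x) = Φ(p) + max_{μ∈M(p)} (-μᵀ(x - p)) for all x ∈ B. -/
/-- Within the conic-neighbourhood-constant radius γ₀ around a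
critical point p, the active sets shrink to M(p) and Φ is conic:
Φ(x) = Φ(p) + max_{μ∈M(p)} (-μᵀ(x-p)). -/
theorem stmt_17 (n : ℕ) (M : Finset (EuclideanSpace ℝ (Fin n))) (hM : M.Nonempty)
    (b : EuclideanSpace ℝ (Fin n) → ℝ)
    (Φ : EuclideanSpace ℝ (Fin n) → ℝ)
    (hΦ : ∀ x, Φ x = ⨆ κ : {κ // κ ∈ M}, (-(inner ℝ (κ : EuclideanSpace ℝ (Fin n)) x) + b κ))
    (Act : EuclideanSpace ℝ (Fin n) → Set (EuclideanSpace ℝ (Fin n)))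
    (hAct : ∀ x, Act x = {κ : EuclideanSpace ℝ (Fin n) | κ ∈ M ∧
        Φ x = -(inner ℝ κ x) + b κ})
    (R : EuclideanSpace ℝ (Fin n) → Set (EuclideanSpace ℝ (Fin n)))
    (hR : ∀ μ, R μ = {x : EuclideanSpace ℝ (Fin n) |
        ∀ ν ∈ M, -(inner ℝ ν x) + b ν ≤ -(inner ℝ μ x) + b μ})
    (C : Set (EuclideanSpace ℝ (Fin n)))
    (hC : C = {q : EuclideanSpace ℝ (Fin n) |
        Submodule.span ℝ {d : EuclideanSpace ℝ (Fin n) |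
          ∃ κ ∈ Act q, ∃ κ' ∈ Act q, d = κ - κ'} = ⊤})
    (p : EuclideanSpace ℝ (Fin n)) (hp : p ∈ C)
    (γ₀ : ℝ)
    (hγ₀ : ∀ p' ∈ C, ∀ μ ∈ M, p' ∉ R μ → 2 * γ₀ ≤ Metric.infDist p' (R μ)) :
    ∀ x ∈ Metric.closedBall p γ₀,
      Act x ⊆ Act p ∧
      Φ x = Φ p + ⨆ κ : {κ // κ ∈ Act p},
        -(inner ℝ (κ : EuclideanSpace ℝ (Fin n)) (x - p)) := by
  intro x hx
  have hne : Nonempty {κ // κ ∈ M} := ⟨⟨hM.choose, hM.choose_spec⟩⟩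
  -- there is a maximizer μ of the affine functions at x
  obtain ⟨⟨μ, hμM⟩, hμmax⟩ := Finite.exists_max
    (fun κ : {κ // κ ∈ M} => -(inner ℝ (κ : EuclideanSpace ℝ (Fin n)) x : ℝ) + b κ)
  have hΦx : Φ x = -(inner ℝ μ x : ℝ) + b μ := by
    rw [hΦ]
    apply le_antisymm
    · exact ciSup_le fun κ => hμmax κ
    · exact le_ciSup (f := fun κ : {κ // κ ∈ M} => -(inner ℝ (κ : EuclideanSpace ℝ (Fin n)) x : ℝ) + b κ) (Set.Finite.bddAbove (Set.finite_range _)) ⟨μ, hμM⟩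
  have hμAct : μ ∈ Act x := by rw [hAct]; exact ⟨hμM, hΦx⟩
  -- key inclusion
  have hsub : Act x ⊆ Act p := by
    intro ν hν
    rw [hAct] at hν
    obtain ⟨hνM, hνeq⟩ := hν
    have hxR : x ∈ R ν := by
      rw [hR]
      intro κ hκ
      have h1 : -(inner ℝ κ x : ℝ) + b κ ≤ Φ x := by
        rw [hΦ]
        exact le_ciSup (f := fun κ : {κ // κ ∈ M} => -(inner ℝ (κ : EuclideanSpace ℝ (Fin n)) x : ℝ) + b κ) (Set.Finite.bddAbove (Set.finite_range _)) ⟨κ, hκ⟩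
      rw [hνeq] at h1
      exact h1
    have hpR : p ∈ R ν := by
      by_contra hpR
      have h2 := hγ₀ p hp ν hνM hpR
      have hle : Metric.infDist p (R ν) ≤ dist p x := Metric.infDist_le_dist_of_mem hxR
      have hdx : dist x p ≤ γ₀ := Metric.mem_closedBall.mp hx
      rw [dist_comm] at hdx
      have hγ0 : γ₀ ≤ 0 := by linarith
      have hd0 : dist p x = 0 := le_antisymm (by linarith) dist_nonneg
      have hxp : x = p := by
        rw [dist_comm] at hd0; exact dist_eq_zero.mp hd0
      exact hpR (hxp ▸ hxR)
    rw [hAct]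
    refine ⟨hνM, ?_⟩
    rw [hR] at hpR
    rw [hΦ]
    apply le_antisymm
    · exact ciSup_le fun κ => hpR κ κ.2
    · exact le_ciSup (f := fun κ : {κ // κ ∈ M} => -(inner ℝ (κ : EuclideanSpace ℝ (Fin n)) p : ℝ) + b κ) (Set.Finite.bddAbove (Set.finite_range _)) ⟨ν, hνM⟩
  have hμp : μ ∈ Act p := hsub hμAct
  have hActpM : Act p ⊆ ↑M := by rw [hAct]; exact fun κ hκ => hκ.1
  have hfinS : (Act p).Finite := M.finite_toSet.subset hActpM
  have : Finite {κ // κ ∈ Act p} := hfinS.to_subtype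
  have : Nonempty {κ // κ ∈ Act p} := ⟨⟨μ, hμp⟩⟩
  refine ⟨hsub, ?_⟩
  have hΦp : Φ p = -(inner ℝ μ p : ℝ) + b μ := by
    rw [hAct] at hμp; exact hμp.2
  have key : (⨆ κ : {κ // κ ∈ Act p},
      -(inner ℝ (κ : EuclideanSpace ℝ (Fin n)) (x - p) : ℝ)) = -(inner ℝ μ (x - p) : ℝ) := by
    apply le_antisymm
    · refine ciSup_le fun κ => ?_
      obtain ⟨κ, hκ⟩ := κ
      rw [hAct] at hκ
      have hκM : κ ∈ M := hκ.1
      have hκeq : Φ p = -(inner ℝ κ p : ℝ) + b κ := hκ.2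
      have h1 : -(inner ℝ κ x : ℝ) + b κ ≤ Φ x := by
        rw [hΦ]
        exact le_ciSup (f := fun κ : {κ // κ ∈ M} => -(inner ℝ (κ : EuclideanSpace ℝ (Fin n)) x : ℝ) + b κ) (Set.Finite.bddAbove (Set.finite_range _)) ⟨κ, hκM⟩
      have e1 : (inner ℝ κ (x - p) : ℝ) = inner ℝ κ x - inner ℝ κ p := inner_sub_right _ _ _
      have e2 : (inner ℝ μ (x - p) : ℝ) = inner ℝ μ x - inner ℝ μ p := inner_sub_right _ _ _
      simp only [e1, e2]
      rw [hΦx] at h1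
      linarith [hκeq, hΦp]
    · exact le_ciSup (f := fun κ : {κ // κ ∈ Act p} => -(inner ℝ (κ : EuclideanSpace ℝ (Fin n)) (x - p) : ℝ)) (Set.Finite.bddAbove (Set.finite_range _)) ⟨μ, hμp⟩
  have e2 : (inner ℝ μ (x - p) : ℝ) = inner ℝ μ x - inner ℝ μ p := inner_sub_right _ _ _
  rw [hΦx, hΦp, key, e2]
  ring
end

section
/- Let M ⊂ ℝⁿ be finite with Φ(x) = max_{μ∈M}(-μᵀx + b_μ) and critical set C = { p : span{μ-μ' : μ,μ' ∈ M(p)} = ℝⁿ }, assumed nonempty and such that every nonempty region R_ν has an extreme point. Then there exists a critical point p ∈ C such that ‖ξ(p)‖ ≤ ‖ξ(x)‖ for all x ∈ ℝⁿ, where ξ(x) denotes the unique minimum-norm element of the convex hull of M(x). -/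
/-- If the critical set C is nonempty and every nonempty region
has an extreme point, then there is a critical point p whose actual drift ξ(p)
has minimum norm among all actual drifts ξ(x). -/
theorem stmt_19 (n : ℕ) (M : Finset (EuclideanSpace ℝ (Fin n))) (hM : M.Nonempty)
    (b : EuclideanSpace ℝ (Fin n) → ℝ)
    (Act : EuclideanSpace ℝ (Fin n) → Set (EuclideanSpace ℝ (Fin n)))
    (hAct : ∀ p, Act p = {κ : EuclideanSpace ℝ (Fin n) | κ ∈ M ∧
        ∀ ν ∈ M, -(inner ℝ ν p) + b ν ≤ -(inner ℝ κ p) + b κ})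
    (R : EuclideanSpace ℝ (Fin n) → Set (EuclideanSpace ℝ (Fin n)))
    (hR : ∀ ν, R ν = {x : EuclideanSpace ℝ (Fin n) |
        ∀ κ ∈ M, -(inner ℝ κ x) + b κ ≤ -(inner ℝ ν x) + b ν})
    (C : Set (EuclideanSpace ℝ (Fin n)))
    (hC : C = {q : EuclideanSpace ℝ (Fin n) |
        Submodule.span ℝ {d : EuclideanSpace ℝ (Fin n) |
          ∃ κ ∈ Act q, ∃ κ' ∈ Act q, d = κ - κ'} = ⊤})
    (hCne : C.Nonempty)
    (hext : ∀ ν ∈ M, (R ν).Nonempty → (Set.extremePoints ℝ (R ν)).Nonempty)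
    (ξ : EuclideanSpace ℝ (Fin n) → EuclideanSpace ℝ (Fin n))
    (hξ : ∀ x, ξ x ∈ convexHull ℝ (Act x) ∧
        ∀ v ∈ convexHull ℝ (Act x), ‖ξ x‖ ≤ ‖v‖) :
    ∃ p ∈ C, ∀ x : EuclideanSpace ℝ (Fin n), ‖ξ p‖ ≤ ‖ξ x‖ := by
  classical
  let V : EuclideanSpace ℝ (Fin n) → EuclideanSpace ℝ (Fin n) → ℝ :=
    fun κ w => -(inner ℝ κ w : ℝ) + b κ
  have hmem : ∀ (w κ : EuclideanSpace ℝ (Fin n)),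
      κ ∈ Act w ↔ κ ∈ M ∧ ∀ ν ∈ M, V ν w ≤ V κ w := by
    intro w κ; rw [hAct w]; exact Iff.rfl
  have hActM : ∀ w, Act w ⊆ ↑M := fun w κ hκ => ((hmem w κ).1 hκ).1
  have hActne : ∀ w, (Act w).Nonempty := by
    intro w
    obtain ⟨ν, hνM, hν⟩ := M.exists_max_image (fun κ => V κ w) hM
    exact ⟨ν, (hmem w ν).2 ⟨hνM, hν⟩⟩
  have hnorm_eq : ∀ w w', Act w = Act w' → ‖ξ w‖ = ‖ξ w'‖ := by
    intro w w' h
    refine le_antisymm ((hξ w).2 _ ?_) ((hξ w').2 _ ?_)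
    · rw [h]; exact (hξ w').1
    · rw [← h]; exact (hξ w).1
  -- finiteness of the set of values of ‖ξ ·‖
  have hfin : (Set.range fun x => ‖ξ x‖).Finite := by
    have hsub : (Set.range fun x => ‖ξ x‖) ⊆
        ⋃ S ∈ M.powerset, {r : ℝ | ∃ w, Act w = ↑S ∧ r = ‖ξ w‖} := by
      rintro r ⟨x, rfl⟩
      refine Set.mem_iUnion₂.mpr ⟨M.filter (fun κ => κ ∈ Act x),
        Finset.mem_powerset.2 (M.filter_subset _), ⟨x, ?_, rfl⟩⟩
      ext κ
      simp only [Finset.coe_filter, Set.mem_setOf_eq]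
      exact ⟨fun h => ⟨hActM x h, h⟩, fun h => h.2⟩
    refine Set.Finite.subset (Set.Finite.biUnion M.powerset.finite_toSet ?_) hsub
    intro S _
    apply Set.Subsingleton.finite
    rintro r ⟨w, hw, rfl⟩ r' ⟨w', hw', rfl⟩
    exact hnorm_eq w w' (hw.trans hw'.symm)
  obtain ⟨r, hrmem, hrmin⟩ := Set.exists_min_image _ id hfin ⟨‖ξ 0‖, 0, rfl⟩
  obtain ⟨x₀, rfl⟩ := hrmem
  have hx₀ : ∀ x, ‖ξ x₀‖ ≤ ‖ξ x‖ := fun x => hrmin _ ⟨x, rfl⟩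
  -- key lemma: every Act x is contained in Act p for some critical p
  have key : ∀ x, ∃ p ∈ C, Act x ⊆ Act p := by
    intro x
    let cardOf : EuclideanSpace ℝ (Fin n) → ℕ :=
      fun w => (M.filter (fun κ => κ ∈ Act w)).card
    have hbound : ∀ w, cardOf w ≤ M.card :=
      fun w => Finset.card_le_card (M.filter_subset _)
    obtain ⟨k, ⟨y, hxy, hyk⟩, hkmax⟩ :
        ∃ k, (∃ y, Act x ⊆ Act y ∧ cardOf y = k) ∧
          ∀ k', (∃ y, Act x ⊆ Act y ∧ cardOf y = k') → k' ≤ k := by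
      have hKfin : {k | ∃ y, Act x ⊆ Act y ∧ cardOf y = k}.Finite := by
        refine (Set.finite_Iic M.card).subset ?_
        rintro k ⟨y, _, rfl⟩; exact hbound y
      obtain ⟨k, hk, hmax⟩ := Set.exists_max_image _ id hKfin
        ⟨cardOf x, x, Set.Subset.rfl, rfl⟩
      exact ⟨k, hk, fun k' hk' => hmax k' hk'⟩
    refine ⟨y, ?_, hxy⟩
    rw [hC]
    by_contra hspan
    simp only [Set.mem_setOf_eq] at hspan
    obtain ⟨d, hdmem, hd0⟩ :
        ∃ d : EuclideanSpace ℝ (Fin n),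
          d ∈ (Submodule.span ℝ {d : EuclideanSpace ℝ (Fin n) |
            ∃ κ ∈ Act y, ∃ κ' ∈ Act y, d = κ - κ'})ᗮ ∧ d ≠ 0 := by
      have h1 : (Submodule.span ℝ {d : EuclideanSpace ℝ (Fin n) |
          ∃ κ ∈ Act y, ∃ κ' ∈ Act y, d = κ - κ'})ᗮ ≠ ⊥ := by
        intro h; exact hspan (Submodule.orthogonal_eq_bot_iff.mp h)
      obtain ⟨d, hd1, hd2⟩ := (Submodule.ne_bot_iff _).mp h1
      exact ⟨d, hd1, hd2⟩
    obtain ⟨ν, hν⟩ := hActne y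
    have hνM : ν ∈ M := hActM y hν
    have hνmax : ∀ κ ∈ M, V κ y ≤ V ν y := ((hmem y ν).1 hν).2
    have hdAct : ∀ κ ∈ Act y, (inner ℝ (κ - ν) d : ℝ) = 0 := by
      intro κ hκ
      exact (Submodule.mem_orthogonal _ d).mp hdmem _
        (Submodule.subset_span ⟨κ, hκ, ν, hν, rfl⟩)
    by_cases hcase : ∀ κ ∈ M, (inner ℝ (κ - ν) d : ℝ) = 0
    · -- Case A : the whole line y + t d stays in R ν; contradicts extreme point
      have hRmem : ∀ w, w ∈ R ν ↔ ∀ κ ∈ M, V κ w ≤ V ν w := by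
        intro w; rw [hR ν]; exact Iff.rfl
      have hyR : y ∈ R ν := (hRmem y).2 hνmax
      obtain ⟨p, hpext⟩ := hext ν hνM ⟨y, hyR⟩
      have hpR : p ∈ R ν := hpext.1
      have hpd : ∀ s : ℝ, p + s • d ∈ R ν := by
        intro s
        refine (hRmem _).2 (fun κ hκ => ?_)
        have h0 := (hRmem p).1 hpR κ hκ
        have hi : (inner ℝ κ d : ℝ) = (inner ℝ ν d : ℝ) := by
          have h := hcase κ hκ; rw [inner_sub_left] at h; linarith
        have e1 : V κ (p + s • d) = V κ p - s * (inner ℝ κ d : ℝ) := by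
          simp only [V, inner_add_right, inner_smul_right]; ring
        have e2 : V ν (p + s • d) = V ν p - s * (inner ℝ ν d : ℝ) := by
          simp only [V, inner_add_right, inner_smul_right]; ring
        rw [e1, e2, hi]
        simp only [V] at h0 ⊢
        linarith
      have hmid : p ∈ openSegment ℝ (p + (-1 : ℝ) • d) (p + (1 : ℝ) • d) := by
        refine ⟨1/2, 1/2, by norm_num, by norm_num, by norm_num, ?_⟩
        module
      have hcon := (hpext.2 (hpd (-1)) (hpd 1) hmid)
      apply hd0
      have : p + (-1 : ℝ) • d = p := hcon
      simpa using this
    · -- Case B : can move to a strictly larger active set, contradiction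
      push_neg at hcase
      obtain ⟨κ₀, hκ₀M, hκ₀⟩ := hcase
      obtain ⟨e, heD, he₀⟩ : ∃ e : EuclideanSpace ℝ (Fin n),
          (∀ κ ∈ Act y, (inner ℝ (κ - ν) e : ℝ) = 0) ∧
            (inner ℝ (κ₀ - ν) e : ℝ) < 0 := by
        rcases lt_or_gt_of_ne hκ₀ with h | h
        · exact ⟨d, hdAct, h⟩
        · refine ⟨-d, fun κ hκ => ?_, ?_⟩
          · rw [inner_neg_right, hdAct κ hκ, neg_zero]
          · rw [inner_neg_right]; linarith
      let c : EuclideanSpace ℝ (Fin n) → ℝ := fun κ => -(inner ℝ (κ - ν) e : ℝ)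
      let g : EuclideanSpace ℝ (Fin n) → ℝ := fun κ => V ν y - V κ y
      have hgnn : ∀ κ ∈ M, 0 ≤ g κ := by
        intro κ hκ; have := hνmax κ hκ; simp only [g]; linarith
      have hgpos : ∀ κ ∈ M, κ ∉ Act y → 0 < g κ := by
        intro κ hκ hκn
        rcases (hgnn κ hκ).lt_or_eq with h | h
        · exact h
        · exfalso; apply hκn
          refine (hmem y κ).2 ⟨hκ, fun κ' hκ' => ?_⟩
          have hVeq : V κ y = V ν y := by simp only [g] at h; linarith
          rw [hVeq]; exact hνmax κ' hκ'
      have hcAct : ∀ κ ∈ Act y, c κ = 0 := by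
        intro κ hκ; simp only [c, heD κ hκ, neg_zero]
      let F := M.filter (fun κ => 0 < c κ)
      have hκ₀F : κ₀ ∈ F := Finset.mem_filter.2 ⟨hκ₀M, by simp only [c]; linarith⟩
      obtain ⟨κm, hκmF, hκmmin⟩ := F.exists_min_image (fun κ => g κ / c κ) ⟨κ₀, hκ₀F⟩
      have hκmM : κm ∈ M := (Finset.mem_filter.1 hκmF).1
      have hcκm : 0 < c κm := (Finset.mem_filter.1 hκmF).2
      have hκmnA : κm ∉ Act y := by
        intro h; rw [hcAct κm h] at hcκm; exact lt_irrefl 0 hcκm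
      set T : ℝ := g κm / c κm with hT
      have hTpos : 0 < T := div_pos (hgpos κm hκmM hκmnA) hcκm
      set z := y + T • e with hz
      have hdiff : ∀ κ, V κ z - V ν z = -(g κ) + T * c κ := by
        intro κ
        have e1 : V κ z = V κ y - T * (inner ℝ κ e : ℝ) := by
          simp only [V, hz, inner_add_right, inner_smul_right]; ring
        have e2 : V ν z = V ν y - T * (inner ℝ ν e : ℝ) := by
          simp only [V, hz, inner_add_right, inner_smul_right]; ring
        rw [e1, e2]
        simp only [g, c, inner_sub_left]
        ring
      have hνz : ν ∈ Act z := by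
        refine (hmem z ν).2 ⟨hνM, fun κ hκ => ?_⟩
        have hd := hdiff κ
        by_cases hcκ : 0 < c κ
        · have hκF : κ ∈ F := Finset.mem_filter.2 ⟨hκ, hcκ⟩
          have hle : T ≤ g κ / c κ := hκmmin κ hκF
          have : T * c κ ≤ g κ := by
            rw [← div_mul_cancel₀ (g κ) (ne_of_gt hcκ)]
            exact mul_le_mul_of_nonneg_right hle (le_of_lt hcκ)
          linarith
        · push_neg at hcκ
          have h1 : T * c κ ≤ 0 := mul_nonpos_of_nonneg_of_nonpos (le_of_lt hTpos) hcκ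
          have h2 := hgnn κ hκ
          linarith
      have hνzmax : ∀ κ ∈ M, V κ z ≤ V ν z := ((hmem z ν).1 hνz).2
      have hsubz : Act y ⊆ Act z := by
        intro κ hκ
        have hκM := hActM y hκ
        have hgκ : g κ = 0 := by
          have h1 := ((hmem y κ).1 hκ).2 ν hνM
          have h2 := hνmax κ ((hmem y κ).1 hκ).1
          simp only [g]; linarith
        have hVeq : V κ z = V ν z := by
          have := hdiff κ; rw [hgκ, hcAct κ hκ] at this; linarith
        refine (hmem z κ).2 ⟨hκM, fun κ' hκ' => ?_⟩
        rw [hVeq]; exact hνzmax κ' hκ'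
      have hκmz : κm ∈ Act z := by
        have hVeq : V κm z = V ν z := by
          have h := hdiff κm
          have : T * c κm = g κm := div_mul_cancel₀ (g κm) (ne_of_gt hcκm)
          linarith
        refine (hmem z κm).2 ⟨hκmM, fun κ' hκ' => ?_⟩
        rw [hVeq]; exact hνzmax κ' hκ'
      have hcc : cardOf y < cardOf z := by
        apply Finset.card_lt_card
        constructor
        · intro κ hκ
          rw [Finset.mem_filter] at hκ ⊢
          exact ⟨hκ.1, hsubz hκ.2⟩
        · intro hcontra
          have : κm ∈ M.filter (fun κ => κ ∈ Act y) :=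
            hcontra (Finset.mem_filter.2 ⟨hκmM, hκmz⟩)
          exact hκmnA (Finset.mem_filter.1 this).2
      have := hkmax (cardOf z) ⟨z, hxy.trans hsubz, rfl⟩
      omega
  obtain ⟨p, hpC, hsubp⟩ := key x₀
  refine ⟨p, hpC, fun x => ?_⟩
  have hmemp : ξ x₀ ∈ convexHull ℝ (Act p) := convexHull_mono hsubp (hξ x₀).1
  exact le_trans ((hξ p).2 _ hmemp) (hx₀ x)
end
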